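/- Let C be a category with all limits and finite colimits, such that cofiltered limits commute with finite colimits in C, and let X be a profinite space. Then the category CoSh(X,C) of cosheaves over X valued in C is a full subcategory of the precosheaf category PCoSh(X,C) = Fun(O_c(X),C) closed under all colimits and under cofiltered limits; that is, a colimit or cofiltered limit of cosheaves, computed objectwise in the functor category, is again a cosheaf. -/

import Mathlib

open CategoryTheory CategoryTheory.Limits TopologicalSpace

attribute [local instance] CategoryTheory.ConcreteCategory.instFunLike

universe w' w v u v₂ u₂ v₁ u₁

namespace ProfiniteCosheaves

variable {C : Type u₂} [Category.{v₂} C]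

/-- The canonical binary cofan `A(U) → A(U ⊔ V) ← A(V)` of a precosheaf `A` at a pair of
clopen subsets. -/
def cosheafCofan {X : Type*} [TopologicalSpace X] (A : Clopens X ⥤ C) (U V : Clopens X) :
    BinaryCofan (A.obj U) (A.obj V) :=
  BinaryCofan.mk (A.map (homOfLE le_sup_left : U ⟶ U ⊔ V)) (A.map (homOfLE le_sup_right))

/-- A precosheaf (a functor on the poset of clopen subsets) is a cosheaf if its value at `∅`
is initial and, for disjoint clopens `U, V`, the canonical cofan exhibits `A(U ⊔ V)` as the
coproduct `A(U) ⨿ A(V)`. -/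
structure IsCosheaf {X : Type*} [TopologicalSpace X] (A : Clopens X ⥤ C) : Prop where
  initial : Nonempty (IsInitial (A.obj ⊥))
  binary : ∀ U V : Clopens X, Disjoint U V → Nonempty (IsColimit (cosheafCofan A U V))

/-- The category `CoSh(X, C)` of cosheaves over a profinite space `X` valued in `C`. -/
def CoSheaf (X : Profinite.{u}) (C : Type u₂) [Category.{v₂} C] :=
  ObjectProperty.FullSubcategory (fun A : Clopens X ⥤ C => IsCosheaf A)

instance (X : Profinite.{u}) : Category (CoSheaf X C) := ObjectProperty.FullSubcategory.category _

/-- Preimage of clopen subsets along a continuous map, as a functor. -/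
def clopensComap {X Y : Profinite.{u}} (f : X ⟶ Y) : Clopens Y ⥤ Clopens X where
  obj U := ⟨f ⁻¹' (U : Set Y), U.isClopen.preimage f.hom.hom.continuous⟩
  map {U V} h := homOfLE (fun x hx => leOfHom h hx)

theorem IsCosheaf.comap {X Y : Profinite.{u}} (f : X ⟶ Y) {A : Clopens X ⥤ C}
    (hA : IsCosheaf A) : IsCosheaf (clopensComap f ⋙ A) := by
  constructor
  · have e : (clopensComap f).obj ⊥ = ⊥ := by
      apply SetLike.ext'
      simp [clopensComap]
    exact ⟨hA.initial.some.ofIso (A.mapIso (eqToIso e.symm))⟩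
  · intro U V hUV
    have hUV' : Disjoint ((clopensComap f).obj U) ((clopensComap f).obj V) := by
      rw [disjoint_iff] at hUV ⊢
      have h0 : (U : Set (Y : Type u)) ∩ (V : Set (Y : Type u)) = ∅ := by
        have := congrArg (fun W : Clopens (Y : Type u) => (W : Set (Y : Type u))) hUV
        simpa using this
      apply SetLike.ext'
      exact Set.preimage_inter.symm.trans ((congrArg _ h0).trans Set.preimage_empty)
    obtain ⟨h⟩ := hA.binary _ _ hUV'
    have e : (clopensComap f).obj U ⊔ (clopensComap f).obj V = (clopensComap f).obj (U ⊔ V) := by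
      apply SetLike.ext'
      exact Set.preimage_union.symm
    refine ⟨h.ofIsoColimit (Cocones.ext (A.mapIso (eqToIso e)) ?_)⟩
    rintro ⟨⟨⟩⟩ <;>
      · dsimp [cosheafCofan]
        exact (A.map_comp _ _).symm.trans (congrArg _ (Subsingleton.elim _ _))

/-- The direct image functor `f_* : CoSh(X, C) ⥤ CoSh(Y, C)`, `A ↦ A ∘ f⁻¹`. -/
def coshMapFun {X Y : Profinite.{u}} (f : X ⟶ Y) : CoSheaf X C ⥤ CoSheaf Y C :=
  ObjectProperty.lift _
    (ObjectProperty.ι _ ⋙ (Functor.whiskeringLeft (Clopens Y) (Clopens X) C).obj (clopensComap f))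
    (fun A => A.property.comap f)

/-- The functor `Profinite ⥤ Cat` sending `X` to the category of cosheaves on `X` valued in `C`,
and a continuous map to the direct image functor. -/
def coshFunctor (C : Type u₂) [Category.{v₂} C] : Profinite.{u} ⥤ Cat where
  obj X := Cat.of (CoSheaf X C)
  map f := (coshMapFun f).toCatHom
  map_id _ := rfl
  map_comp _ _ := rfl

/-- The total category `CoSh(C)` of profinite cosheaves valued in `C`, i.e. the Grothendieck
construction of `X ↦ CoSh(X, C)`. Objects are pairs `(X, A)` with `A` a cosheaf on `X`;
a morphism `(X, A) ⟶ (Y, B)` is a pair `(f, φ)` with `f : X ⟶ Y` continuous and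
`φ : A ∘ f⁻¹ ⟶ B`. -/
def CoSh (C : Type u₂) [Category.{v₂} C] :=
  Grothendieck (coshFunctor.{u} C)

instance : Category (CoSh.{u} C) := inferInstanceAs (Category (Grothendieck _))

/-- The global cosections functor `CoSh(C) ⥤ C`, `(A, X) ↦ A(X)`. -/
def globalCosections (C : Type u₂) [Category.{v₂} C] : CoSh.{u} C ⥤ C where
  obj P := P.fiber.obj.obj ⊤
  map {P Q} g :=
    P.fiber.obj.map (homOfLE (fun x _ => Set.mem_univ _) : (⊤ : Clopens P.base) ⟶ _) ≫
      NatTrans.app g.fiber.hom ⊤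
  map_id := by
    intro X
    have hX : X.fiber.obj.map (homOfLE (fun x _ => Set.mem_univ _) : (⊤ : Clopens X.base) ⟶ ⊤) =
        𝟙 _ := (congrArg X.fiber.obj.map (Subsingleton.elim _ _)).trans (X.fiber.obj.map_id ⊤)
    exact (congrArg (· ≫ _) hX).trans (Category.id_comp _)
  map_comp := by
    intro P Q R f g
    have hP : P.fiber.obj.map (homOfLE (fun x _ => Set.mem_univ _) : (⊤ : Clopens P.base) ⟶ ⊤) =
        𝟙 _ := (congrArg P.fiber.obj.map (Subsingleton.elim _ _)).trans (P.fiber.obj.map_id ⊤)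
    have hQ : Q.fiber.obj.map (homOfLE (fun x _ => Set.mem_univ _) : (⊤ : Clopens Q.base) ⟶ ⊤) =
        𝟙 _ := (congrArg Q.fiber.obj.map (Subsingleton.elim _ _)).trans (Q.fiber.obj.map_id ⊤)
    have key : (Grothendieck.comp f g).fiber.hom.app ⊤ = f.fiber.hom.app ⊤ ≫ g.fiber.hom.app ⊤ :=
      Category.id_comp _
    refine (congrArg (· ≫ _) hP).trans ((Category.id_comp _).trans (key.trans ?_))
    exact congrArg₂ (· ≫ ·) ((Category.id_comp _).symm.trans (congrArg (· ≫ _) hP.symm))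
      ((Category.id_comp _).symm.trans (congrArg (· ≫ _) hQ.symm))

/-- The poset of clopen neighbourhoods of a point, as a category. -/
def Nbhds (X : Profinite.{u}) (x : X) := ObjectProperty.FullSubcategory (fun U : Clopens X => x ∈ U)

instance (X : Profinite.{u}) (x : X) : Category (Nbhds X x) := ObjectProperty.FullSubcategory.category _

/-- The diagram of values of `A` on the clopen neighbourhoods of `x`; the costalk of `A` at `x`
is its (inverse) limit. -/
def costalkDiagram {X : Profinite.{u}} (A : Clopens X ⥤ C) (x : X) : Nbhds X x ⥤ C :=
  ObjectProperty.ι _ ⋙ A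

/-- The costalk `A_x = lim_{V ∋ x} A(V)` of a precosheaf at a point. -/
noncomputable def costalk {X : Profinite.{u}} (A : Clopens X ⥤ C) (x : X)
    [HasLimit (costalkDiagram A x)] : C :=
  limit (costalkDiagram A x)

/-- `c` is *a* costalk of `A` at `x` if the costalk diagram of `A` at `x` admits a limit cone
whose point is isomorphic to `c`. -/
def IsCostalk {X : Profinite.{u}} (A : Clopens X ⥤ C) (x : X) (c : C) : Prop :=
  ∃ t : Cone (costalkDiagram A x), Nonempty (IsLimit t) ∧ Nonempty (t.pt ≅ c)

/-- The pro-completion of a category: the free completion under cofiltered limits, realised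
concretely as the opposite of the category of left-exact functors to `Type`. -/
def ProCompletion (E : Type u₁) [Category.{v₁} E] :=
  (ObjectProperty.FullSubcategory fun F : E ⥤ Type v₁ => Nonempty (PreservesFiniteLimits F))ᵒᵖ

instance (E : Type u₁) [Category.{v₁} E] : Category (ProCompletion E) :=
  inferInstanceAs (Category (ObjectProperty.FullSubcategory _)ᵒᵖ)

/-- The canonical (co-Yoneda) embedding of a category into its pro-completion. -/
def proEmbedding (E : Type u₁) [Category.{v₁} E] : E ⥤ ProCompletion E where
  obj e := Opposite.op ⟨coyoneda.obj (Opposite.op e), ⟨inferInstance⟩⟩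
  map {e e'} f := Quiver.Hom.op
    (show (⟨coyoneda.obj (Opposite.op e'), ⟨inferInstance⟩⟩ : ObjectProperty.FullSubcategory _) ⟶
        ⟨coyoneda.obj (Opposite.op e), ⟨inferInstance⟩⟩ from ObjectProperty.homMk (coyoneda.map f.op))

/-- A regular category: it has finite limits, coequalisers of kernel pairs, and regular
epimorphisms are stable under pullback. -/
class IsRegularCategory (C : Type u₂) [Category.{v₂} C] : Prop where
  hasFiniteLimits : HasFiniteLimits C
  hasCoeqOfKernelPairs : ∀ {R X Y : C} (f : X ⟶ Y) (a b : R ⟶ X),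
    IsPullback a b f f → HasCoequalizer a b
  regularEpi_stable : ∀ {P X Y Z : C} (f : X ⟶ Z) (g : Y ⟶ Z) (p₁ : P ⟶ X) (p₂ : P ⟶ Y),
    IsPullback p₁ p₂ f g → Nonempty (RegularEpi f) → Nonempty (RegularEpi p₂)

/-- `D` is closed under subobjects in its pro-completion: any subobject (in `Pro(D)`) of an
object of `D` is isomorphic to an object of `D`. -/
def ClosedUnderSubobjects (D : Type u) [SmallCategory D] : Prop :=
  ∀ (d : D) (c : ProCompletion D) (m : c ⟶ (proEmbedding D).obj d), Mono m →
    ∃ d' : D, Nonempty (c ≅ (proEmbedding D).obj d')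

/-- The coprojection maps into binary coproducts are monomorphisms. -/
def MonoCoprojections (C : Type u₂) [Category.{v₂} C] : Prop :=
  ∀ (a b p : C) (inl : a ⟶ p) (inr : b ⟶ p),
    Nonempty (IsColimit (BinaryCofan.mk inl inr)) → Mono inl ∧ Mono inr

/-- Cofiltered limits commute with finite colimits in `C`: for every finite category `J`,
the colimit functor `(J ⥤ C) ⥤ C` preserves cofiltered limits (of shapes of size `w`). -/
def CofilteredLimitsCommuteWithFiniteColimits (C : Type u₂) [Category.{v₂} C]
    [HasFiniteColimits C] : Prop :=
  ∀ (J : Type) [SmallCategory J] [FinCategory J] (K : Type w) [SmallCategory K] [IsCofiltered K],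
    PreservesLimitsOfShape K (colim (J := J) (C := C))

/-- The full subcategory of "finite objects" of `CoSh(Pro(D))`: cosheaves `(A, X)` with `X`
finite such that every costalk of `A` lies in (the image of) `D`. -/
def CoShFinProp (D : Type u) [SmallCategory D] (P : CoSh.{u} (ProCompletion D)) : Prop :=
  Finite (P.base : Type u) ∧
    ∀ x : P.base, ∃ d : D, IsCostalk P.fiber.obj x ((proEmbedding D).obj d)

/-- The category `CoSh(Pro(D))_fin` of finite cosheaf objects. -/
def CoShFin (D : Type u) [SmallCategory D] := ObjectProperty.FullSubcategory (CoShFinProp D)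

instance (D : Type u) [SmallCategory D] : Category (CoShFin D) := ObjectProperty.FullSubcategory.category _

end ProfiniteCosheaves

namespace ProfiniteCosheaves


section Aux

variable {C : Type u₂} [Category.{u} C]

/-- A colimit of initial objects is initial. -/
noncomputable def isInitialOfIsColimitOfIsInitial {J : Type u} [SmallCategory J]
    {E : J ⥤ C} (h : ∀ j, IsInitial (E.obj j)) {c : Cocone E} (hc : IsColimit c) :
    IsInitial c.pt :=
  IsInitial.ofUniqueHom
    (fun Z => hc.desc ⟨Z, ⟨fun j => (h j).to Z, fun {j j'} f => (h j).hom_ext _ _⟩⟩)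
    (fun Z m => hc.hom_ext fun j => by
      rw [hc.fac]
      exact (h j).hom_ext _ _)

/-- A cofiltered limit of initial objects is initial (using only that `C` has an initial
object). -/
noncomputable def isInitialOfIsCofilteredLimitOfIsInitial {J : Type u} [SmallCategory J]
    [IsCofiltered J] [HasInitial C]
    {E : J ⥤ C} (h : ∀ j, IsInitial (E.obj j)) {t : Cone E} (ht : IsLimit t) :
    IsInitial t.pt := by
  haveI : Nonempty J := IsCofiltered.nonempty
  have j₀ : J := Classical.arbitrary J
  let c0 : Cone E :=
    { pt := ⊥_ C
      π := ⟨fun j => initial.to _, fun {j j'} f => initialIsInitial.hom_ext _ _⟩ }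
  have hc0 : IsLimit c0 :=
    { lift := fun s => s.π.app j₀ ≫ (h j₀).to (⊥_ C)
      fac := fun s j => by
        show (s.π.app j₀ ≫ (h j₀).to (⊥_ C)) ≫ initial.to (E.obj j) = s.π.app j
        have h1 : s.π.app j₀ = s.π.app (IsCofiltered.min j₀ j) ≫ E.map (IsCofiltered.minToLeft j₀ j) :=
          (s.w (IsCofiltered.minToLeft j₀ j)).symm
        have h2 : s.π.app j = s.π.app (IsCofiltered.min j₀ j) ≫ E.map (IsCofiltered.minToRight j₀ j) :=
          (s.w (IsCofiltered.minToRight j₀ j)).symm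
        rw [h1, h2, Category.assoc, Category.assoc]
        congr 1
        exact (h _).hom_ext _ _
      uniq := fun s m w => by
        show m = s.π.app j₀ ≫ (h j₀).to (⊥_ C)
        have h1 : (initial.to (E.obj j₀) ≫ (h j₀).to (⊥_ C)) = 𝟙 (⊥_ C) :=
          initialIsInitial.hom_ext _ _
        have w0 : m ≫ initial.to (E.obj j₀) = s.π.app j₀ := w j₀
        calc m = m ≫ initial.to (E.obj j₀) ≫ (h j₀).to (⊥_ C) := by
                rw [h1, Category.comp_id]
          _ = s.π.app j₀ ≫ (h j₀).to (⊥_ C) := by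
                rw [← Category.assoc, w0] }
  exact initialIsInitial.ofIso (hc0.conePointUniqueUpToIso ht)

variable {X : Profinite.{u}} {J : Type u} [SmallCategory J]

/-- The cocone used to construct the descent map for a colimit of cosheaves. -/
@[simps]
noncomputable def descCocone (F : J ⥤ (Clopens X ⥤ C)) (U V : Clopens X)
    (dj : ∀ j, IsColimit (cosheafCofan (F.obj j) U V)) (c : Cocone F)
    (s : BinaryCofan (c.pt.obj U) (c.pt.obj V)) :
    Cocone (F ⋙ (evaluation (Clopens X) C).obj (U ⊔ V)) where
  pt := s.pt
  ι :=
    { app := fun j => (dj j).desc (BinaryCofan.mk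
        ((c.ι.app j).app U ≫ s.inl) ((c.ι.app j).app V ≫ s.inr))
      naturality := fun {j j'} f => by
        have facL : ∀ (k : J) (B : BinaryCofan ((F.obj k).obj U) ((F.obj k).obj V)),
            (F.obj k).map (homOfLE le_sup_left : U ⟶ U ⊔ V) ≫ (dj k).desc B = B.inl :=
          fun k B => (dj k).fac B ⟨WalkingPair.left⟩
        have facR : ∀ (k : J) (B : BinaryCofan ((F.obj k).obj U) ((F.obj k).obj V)),
            (F.obj k).map (homOfLE le_sup_right : V ⟶ U ⊔ V) ≫ (dj k).desc B = B.inr :=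
          fun k B => (dj k).fac B ⟨WalkingPair.right⟩
        apply (dj j).hom_ext
        rintro ⟨(_ | _)⟩
        · show (F.obj j).map (homOfLE le_sup_left) ≫ _ = (F.obj j).map (homOfLE le_sup_left) ≫ _
          simp only [Functor.comp_map, evaluation_obj_map, Functor.const_obj_obj,
            Functor.const_obj_map, Category.comp_id]
          erw [← Category.assoc, NatTrans.naturality, Category.assoc, facL j', Category.comp_id, facL j]
          simp only [BinaryCofan.mk_inl]
          erw [← Category.assoc, ← NatTrans.comp_app, c.w f]
        · show (F.obj j).map (homOfLE le_sup_right) ≫ _ = (F.obj j).map (homOfLE le_sup_right) ≫ _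
          simp only [Functor.comp_map, evaluation_obj_map, Functor.const_obj_obj,
            Functor.const_obj_map, Category.comp_id]
          erw [← Category.assoc, NatTrans.naturality, Category.assoc, facR j', Category.comp_id, facR j]
          simp only [BinaryCofan.mk_inr]
          erw [← Category.assoc, ← NatTrans.comp_app, c.w f] }

/-- A colimit of cosheaves satisfies the binary cosheaf condition, given that the evaluated
cocones are colimits. -/
noncomputable def isColimitCofanOfIsColimit
    (F : J ⥤ (Clopens X ⥤ C)) (U V : Clopens X)
    (dj : ∀ j, IsColimit (cosheafCofan (F.obj j) U V)) (c : Cocone F)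
    (hU : IsColimit (((evaluation (Clopens X) C).obj U).mapCocone c))
    (hV : IsColimit (((evaluation (Clopens X) C).obj V).mapCocone c))
    (hW : IsColimit (((evaluation (Clopens X) C).obj (U ⊔ V)).mapCocone c)) :
    IsColimit (cosheafCofan c.pt U V) := by
  have facL : ∀ (k : J) (B : BinaryCofan ((F.obj k).obj U) ((F.obj k).obj V)),
      (F.obj k).map (homOfLE le_sup_left : U ⟶ U ⊔ V) ≫ (dj k).desc B = B.inl :=
    fun k B => (dj k).fac B ⟨WalkingPair.left⟩
  have facR : ∀ (k : J) (B : BinaryCofan ((F.obj k).obj U) ((F.obj k).obj V)),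
      (F.obj k).map (homOfLE le_sup_right : V ⟶ U ⊔ V) ≫ (dj k).desc B = B.inr :=
    fun k B => (dj k).fac B ⟨WalkingPair.right⟩
  have extU : ∀ {Z : C} (f g : c.pt.obj U ⟶ Z),
      (∀ j, (c.ι.app j).app U ≫ f = (c.ι.app j).app U ≫ g) → f = g :=
    fun f g h => hU.hom_ext fun j => h j
  have extV : ∀ {Z : C} (f g : c.pt.obj V ⟶ Z),
      (∀ j, (c.ι.app j).app V ≫ f = (c.ι.app j).app V ≫ g) → f = g :=
    fun f g h => hV.hom_ext fun j => h j
  have extW : ∀ {Z : C} (f g : c.pt.obj (U ⊔ V) ⟶ Z),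
      (∀ j, (c.ι.app j).app (U ⊔ V) ≫ f = (c.ι.app j).app (U ⊔ V) ≫ g) → f = g :=
    fun f g h => hW.hom_ext fun j => h j
  have hfac : ∀ (s : BinaryCofan (c.pt.obj U) (c.pt.obj V)) (j : J),
      (c.ι.app j).app (U ⊔ V) ≫ hW.desc (descCocone F U V dj c s) =
        (dj j).desc (BinaryCofan.mk ((c.ι.app j).app U ≫ s.inl) ((c.ι.app j).app V ≫ s.inr)) :=
    fun s j => hW.fac (descCocone F U V dj c s) j
  refine BinaryCofan.isColimitMk (fun s => hW.desc (descCocone F U V dj c s)) ?_ ?_ ?_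
  · intro s
    apply extU
    intro j
    have hnat : (F.obj j).map (homOfLE le_sup_left : U ⟶ U ⊔ V) ≫ (c.ι.app j).app (U ⊔ V) =
        (c.ι.app j).app U ≫ c.pt.map (homOfLE le_sup_left) :=
      (c.ι.app j).naturality _
    show (c.ι.app j).app U ≫ c.pt.map (homOfLE le_sup_left) ≫
        hW.desc (descCocone F U V dj c s) = (c.ι.app j).app U ≫ s.inl
    erw [← Category.assoc, ← hnat, Category.assoc, hfac s j, facL j]
    simp
    rfl
  · intro s
    apply extV
    intro j
    have hnat : (F.obj j).map (homOfLE le_sup_right : V ⟶ U ⊔ V) ≫ (c.ι.app j).app (U ⊔ V) =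
        (c.ι.app j).app V ≫ c.pt.map (homOfLE le_sup_right) :=
      (c.ι.app j).naturality _
    show (c.ι.app j).app V ≫ c.pt.map (homOfLE le_sup_right) ≫
        hW.desc (descCocone F U V dj c s) = (c.ι.app j).app V ≫ s.inr
    erw [← Category.assoc, ← hnat, Category.assoc, hfac s j, facR j]
    simp
    rfl
  · intro s m w1 w2
    apply extW
    intro j
    erw [hfac s j]
    apply (dj j).hom_ext
    rintro ⟨(_ | _)⟩
    · have hnat : (F.obj j).map (homOfLE le_sup_left : U ⟶ U ⊔ V) ≫ (c.ι.app j).app (U ⊔ V) =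
          (c.ι.app j).app U ≫ c.pt.map (homOfLE le_sup_left) :=
        (c.ι.app j).naturality _
      show (F.obj j).map (homOfLE le_sup_left) ≫ _ = (F.obj j).map (homOfLE le_sup_left) ≫ _
      erw [facL j]
      simp only [BinaryCofan.mk_inl]
      rw [← Category.assoc, hnat, Category.assoc, w1]
    · have hnat : (F.obj j).map (homOfLE le_sup_right : V ⟶ U ⊔ V) ≫ (c.ι.app j).app (U ⊔ V) =
          (c.ι.app j).app V ≫ c.pt.map (homOfLE le_sup_right) :=
        (c.ι.app j).naturality _
      show (F.obj j).map (homOfLE le_sup_right) ≫ _ = (F.obj j).map (homOfLE le_sup_right) ≫ _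
      erw [facR j]
      simp only [BinaryCofan.mk_inr]
      rw [← Category.assoc, hnat, Category.assoc, w2]

/-- The diagram of pairs of values at two clopens. -/
@[simps]
def pairDiagram (F : J ⥤ (Clopens X ⥤ C)) (U V : Clopens X) :
    J ⥤ Discrete WalkingPair ⥤ C where
  obj j := pair ((F.obj j).obj U) ((F.obj j).obj V)
  map {j j'} f := mapPair ((F.map f).app U) ((F.map f).app V)
  map_id j := by
    apply NatTrans.ext
    funext ⟨k⟩
    cases k <;> simp <;> rfl
  map_comp f g := by
    apply NatTrans.ext
    funext ⟨k⟩
    cases k <;> simp <;> rfl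

/-- The cone over the pair diagram induced by a cone over `F`. -/
@[simps]
def pairCone (F : J ⥤ (Clopens X ⥤ C)) (U V : Clopens X) (t : Cone F) :
    Cone (pairDiagram F U V) where
  pt := pair (t.pt.obj U) (t.pt.obj V)
  π :=
    { app := fun j => mapPair ((t.π.app j).app U) ((t.π.app j).app V)
      naturality := fun {j j'} f => by
        apply NatTrans.ext
        funext ⟨k⟩
        cases k
        · show 𝟙 _ ≫ (t.π.app j').app U = (t.π.app j).app U ≫ (F.map f).app U
          rw [Category.id_comp, ← NatTrans.comp_app, t.w f]
        · show 𝟙 _ ≫ (t.π.app j').app V = (t.π.app j).app V ≫ (F.map f).app V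
          rw [Category.id_comp, ← NatTrans.comp_app, t.w f] }

/-- A cofiltered limit of cosheaves satisfies the binary cosheaf condition. -/
noncomputable def isColimitCofanOfCofilteredLimit [HasLimits C] [HasFiniteColimits C]
    (hcomm : CofilteredLimitsCommuteWithFiniteColimits.{u} C) [IsCofiltered J]
    (F : J ⥤ (Clopens X ⥤ C)) (U V : Clopens X)
    (dj : ∀ j, IsColimit (cosheafCofan (F.obj j) U V))
    (t : Cone F) (ht : IsLimit t) :
    IsColimit (cosheafCofan t.pt U V) := by
  haveI := hcomm (Discrete WalkingPair) J
  have htU := isLimitOfPreserves ((evaluation (Clopens X) C).obj U) ht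
  have htV := isLimitOfPreserves ((evaluation (Clopens X) C).obj V) ht
  have htW := isLimitOfPreserves ((evaluation (Clopens X) C).obj (U ⊔ V)) ht
  have hcG : IsLimit (pairCone F U V t) := by
    apply evaluationJointlyReflectsLimits
    rintro ⟨(_ | _)⟩
    · exact htU
    · exact htV
  have hlim := isLimitOfPreserves (colim (J := Discrete WalkingPair) (C := C)) hcG
  have facL : ∀ (k : J),
      colimit.ι (pair ((F.obj k).obj U) ((F.obj k).obj V)) ⟨WalkingPair.left⟩ ≫
        ((colimit.isColimit (pair ((F.obj k).obj U) ((F.obj k).obj V))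
          ).coconePointUniqueUpToIso (dj k)).hom = (F.obj k).map (homOfLE le_sup_left) :=
    fun k => IsColimit.comp_coconePointUniqueUpToIso_hom
      (colimit.isColimit (pair ((F.obj k).obj U) ((F.obj k).obj V))) (dj k) ⟨WalkingPair.left⟩
  have facR : ∀ (k : J),
      colimit.ι (pair ((F.obj k).obj U) ((F.obj k).obj V)) ⟨WalkingPair.right⟩ ≫
        ((colimit.isColimit (pair ((F.obj k).obj U) ((F.obj k).obj V))
          ).coconePointUniqueUpToIso (dj k)).hom = (F.obj k).map (homOfLE le_sup_right) :=
    fun k => IsColimit.comp_coconePointUniqueUpToIso_hom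
      (colimit.isColimit (pair ((F.obj k).obj U) ((F.obj k).obj V))) (dj k) ⟨WalkingPair.right⟩
  let ψ : pairDiagram F U V ⋙ colim ≅ F ⋙ (evaluation (Clopens X) C).obj (U ⊔ V) :=
    NatIso.ofComponents
      (fun j => (colimit.isColimit (pair ((F.obj j).obj U) ((F.obj j).obj V))
        ).coconePointUniqueUpToIso (dj j))
      (fun {j j'} f => by
        apply colimit.hom_ext
        rintro ⟨(_ | _)⟩
        · simp only [Functor.comp_obj, colim_obj, Functor.comp_map, colim_map,
            pairDiagram_map, evaluation_obj_obj, evaluation_obj_map, ι_colimMap_assoc,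
            pairDiagram_obj, pair_obj_left, mapPair_left]
          erw [ι_colimMap_assoc, mapPair_left, facL j', ← Category.assoc, facL j]
          exact (NatTrans.naturality _ _).symm
        · simp only [Functor.comp_obj, colim_obj, Functor.comp_map, colim_map,
            pairDiagram_map, evaluation_obj_obj, evaluation_obj_map, ι_colimMap_assoc,
            pairDiagram_obj, pair_obj_right, mapPair_right]
          erw [ι_colimMap_assoc, mapPair_right, facR j', ← Category.assoc, facR j]
          exact (NatTrans.naturality _ _).symm)
  let key := IsLimit.conePointsIsoOfNatIso hlim htW ψ
  have hkey : ∀ j : J, key.hom ≫ (t.π.app j).app (U ⊔ V) =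
      colim.map (mapPair ((t.π.app j).app U) ((t.π.app j).app V)) ≫ ψ.hom.app j :=
    fun j => IsLimit.conePointsIsoOfNatIso_hom_comp hlim htW ψ j
  have extW : ∀ {Z : C} (f g : Z ⟶ t.pt.obj (U ⊔ V)),
      (∀ j, f ≫ (t.π.app j).app (U ⊔ V) = g ≫ (t.π.app j).app (U ⊔ V)) → f = g :=
    fun f g h => htW.hom_ext fun j => h j
  refine IsColimit.ofIsoColimit (colimit.isColimit (pair (t.pt.obj U) (t.pt.obj V)))
    (Cocones.ext key ?_)
  rintro ⟨(_ | _)⟩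
  · apply extW
    intro j
    have hnat : t.pt.map (homOfLE le_sup_left : U ⟶ U ⊔ V) ≫ (t.π.app j).app (U ⊔ V) =
        (t.π.app j).app U ≫ (F.obj j).map (homOfLE le_sup_left) :=
      (t.π.app j).naturality _
    show (colimit.ι (pair (t.pt.obj U) (t.pt.obj V)) ⟨WalkingPair.left⟩ ≫ key.hom) ≫
        (t.π.app j).app (U ⊔ V) =
      t.pt.map (homOfLE le_sup_left) ≫ (t.π.app j).app (U ⊔ V)
    erw [hnat, Category.assoc, hkey j, colim_map, ← Category.assoc, ι_colimMap]
    simp only [pairDiagram_obj, pair_obj_left, mapPair_left]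
    erw [mapPair_left, Category.assoc]
    have hψ : colimit.ι (pair ((F.obj j).obj U) ((F.obj j).obj V)) ⟨WalkingPair.left⟩ ≫
        ψ.hom.app j = (F.obj j).map (homOfLE le_sup_left) := by
      simp only [ψ, NatIso.ofComponents_hom_app]
      exact facL j
    erw [hψ]
    rfl
  · apply extW
    intro j
    have hnat : t.pt.map (homOfLE le_sup_right : V ⟶ U ⊔ V) ≫ (t.π.app j).app (U ⊔ V) =
        (t.π.app j).app V ≫ (F.obj j).map (homOfLE le_sup_right) :=
      (t.π.app j).naturality _
    show (colimit.ι (pair (t.pt.obj U) (t.pt.obj V)) ⟨WalkingPair.right⟩ ≫ key.hom) ≫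
        (t.π.app j).app (U ⊔ V) =
      t.pt.map (homOfLE le_sup_right) ≫ (t.π.app j).app (U ⊔ V)
    erw [hnat, Category.assoc, hkey j, colim_map, ← Category.assoc, ι_colimMap]
    simp only [pairDiagram_obj, pair_obj_right, mapPair_right]
    erw [mapPair_right, Category.assoc]
    have hψ : colimit.ι (pair ((F.obj j).obj U) ((F.obj j).obj V)) ⟨WalkingPair.right⟩ ≫
        ψ.hom.app j = (F.obj j).map (homOfLE le_sup_right) := by
      simp only [ψ, NatIso.ofComponents_hom_app]
      exact facR j
    erw [hψ]
    rfl

end Aux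

/-- **Statement 5.** If `C` has all limits and finite colimits, and cofiltered limits commute
with finite colimits in `C`, then for a profinite space `X` the cosheaves form a full
subcategory of the precosheaf (functor) category closed under all colimits and under cofiltered
limits: an objectwise colimit, or objectwise cofiltered limit, of cosheaves is a cosheaf. -/
theorem isCosheaf_closed_under_colimits_and_cofiltered_limits (C : Type u₂) [Category.{u} C]
    [HasLimits C] [HasFiniteColimits C]
    (hcomm : CofilteredLimitsCommuteWithFiniteColimits.{u} C) (X : Profinite.{u}) :
    (∀ (J : Type u) [SmallCategory J] (F : J ⥤ (Clopens X ⥤ C))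
        (_ : ∀ j, IsCosheaf (F.obj j)) (c : Cocone F), IsColimit c → IsCosheaf c.pt) ∧
    (∀ (J : Type u) [SmallCategory J] [IsCofiltered J] (F : J ⥤ (Clopens X ⥤ C))
        (_ : ∀ j, IsCosheaf (F.obj j)) (t : Cone F), IsLimit t → IsCosheaf t.pt) := by
  constructor
  · intro J _ F hF c hc
    have hcw : ∀ W : Clopens X, IsColimit (((evaluation (Clopens ↑X) C).obj W).mapCocone c) :=
      fun W => isColimitOfPreserves _ hc
    constructor
    · exact ⟨isInitialOfIsColimitOfIsInitial (fun j => (hF j).initial.some) (hcw ⊥)⟩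
    · intro U V hUV
      exact ⟨isColimitCofanOfIsColimit F U V (fun j => ((hF j).binary U V hUV).some) c
        (hcw U) (hcw V) (hcw (U ⊔ V))⟩
  · intro J _ _ F hF t ht
    constructor
    · have htb := isLimitOfPreserves ((evaluation (Clopens ↑X) C).obj ⊥) ht
      exact ⟨isInitialOfIsCofilteredLimitOfIsInitial
        (fun j => (hF j).initial.some) htb⟩
    · intro U V hUV
      exact ⟨isColimitCofanOfCofilteredLimit hcomm F U V
        (fun j => ((hF j).binary U V hUV).some) t ht⟩

end ProfiniteCosheaves
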